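/- Let m ≥ 3 be a natural number, let A be a finite set with a strict linear order <, and let B be a weakly (m−1)-wise balanced design over A. Then the chromatic number of Γ_{B,m} satisfies χ(Γ_{B,m}) ≥ (Σ_{C ∈ B} |C|) / (|A| + |B|). -/

import Mathlib

open Finset

/-- `B` is a weakly `m`-wise balanced design over the finite set `A`:
every block is a nonempty subset of `A`, every point of `A` lies in at least
one block, and any `m` pairwise distinct points of `A` are contained together
in at most one block. -/
def IsWeaklyBalancedDesign {α : Type*} [DecidableEq α] (m : ℕ)
    (A : Finset α) (B : Finset (Finset α)) : Prop :=
  (∀ C ∈ B, C ⊆ A) ∧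
  (∀ C ∈ B, C.Nonempty) ∧
  (∀ x ∈ A, ∃ C ∈ B, x ∈ C) ∧
  (∀ S : Finset α, S ⊆ A → S.card = m → (B.filter fun C => S ⊆ C).card ≤ 1)

/-- The vertex set of `Γ_{B,m}`: all incidence pairs `(x, C)` with `x ∈ C ∈ B`. -/
def designVerts {α : Type*} [DecidableEq α] (B : Finset (Finset α)) :
    Finset (α × Finset α) :=
  B.biUnion fun C => C.image fun x => (x, C)

/-- The graph `Γ_{B,m}` on incidence pairs: `(x, C₁)` and `(y, C₂)` are adjacent
iff `x < y`, `C₁ ≠ C₂` and `x ∈ C₂`, or symmetrically `y < x`, `C₂ ≠ C₁` and `y ∈ C₁`. -/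
def designGraph {α : Type*} [inst : LinearOrder α] (B : Finset (Finset α)) :
    SimpleGraph (designVerts (α := α) B) where
  Adj u v :=
    (u.val.1 < v.val.1 ∧ u.val.2 ≠ v.val.2 ∧ u.val.1 ∈ v.val.2) ∨
    (v.val.1 < u.val.1 ∧ v.val.2 ≠ u.val.2 ∧ v.val.1 ∈ u.val.2)
  symm := ⟨fun u v h => by tauto⟩
  loopless := ⟨fun u h => by
    rcases h with ⟨h, _, _⟩ | ⟨h, _, _⟩ <;> exact lt_irrefl _ h⟩

/-- The independence number of a graph: the largest size of an independent set of vertices. -/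
noncomputable def indepNum {V : Type*} (G : SimpleGraph V) : ℕ :=
  sSup {n | ∃ s : Finset V, s.card = n ∧ ∀ x ∈ s, ∀ y ∈ s, ¬ G.Adj x y}

lemma mem_designVerts' {α : Type*} [DecidableEq α] {B : Finset (Finset α)}
    {p : α × Finset α} (h : p ∈ designVerts B) : p.2 ∈ B ∧ p.1 ∈ p.2 := by
  simp only [designVerts, mem_biUnion, mem_image] at h
  obtain ⟨C, hC, x, hx, rfl⟩ := h
  exact ⟨hC, hx⟩

lemma designVerts_card {α : Type*} [DecidableEq α] (B : Finset (Finset α)) :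
    (designVerts B).card = ∑ C ∈ B, C.card := by
  rw [designVerts, card_biUnion]
  · exact Finset.sum_congr rfl fun C _ =>
      Finset.card_image_of_injective _ (fun a b h => (Prod.mk.injEq _ _ _ _ ▸ h).1)
  · intro C1 h1 C2 h2 hne
    simp only [Finset.disjoint_left, mem_image]
    rintro p ⟨x, hx, rfl⟩ ⟨y, hy, h⟩
    exact hne ((Prod.mk.injEq _ _ _ _ ▸ h).2.symm)

lemma indep_card_le {α : Type*} [LinearOrder α]
    (A : Finset α) (B : Finset (Finset α)) (hBA : ∀ C ∈ B, C ⊆ A)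
    (s : Finset (designVerts (α := α) B))
    (hs : ∀ x ∈ s, ∀ y ∈ s, ¬ (designGraph B).Adj x y) :
    s.card ≤ A.card + B.card := by
  classical
  have := Finset.card_le_card_of_injOn
    (f := fun v : designVerts (α := α) B =>
      if ∀ w ∈ s, w.val.2 = v.val.2 → w.val.1 ≤ v.val.1 then Sum.inr v.val.2
      else Sum.inl v.val.1)
    (s := s) (t := A.disjSum B) ?_ ?_
  · simpa using this
  · intro v hv
    simp only
    split_ifs with h
    · exact Finset.inr_mem_disjSum.2 (mem_designVerts' v.2).1
    · exact Finset.inl_mem_disjSum.2 (hBA _ (mem_designVerts' v.2).1 (mem_designVerts' v.2).2)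
  · intro u hu v hv huv
    simp only at huv
    split_ifs at huv with h1 h2 h2
    · (have hC : u.val.2 = v.val.2 := Sum.inr.inj huv
       exact Subtype.ext (Prod.ext (le_antisymm (h2 u hu hC) (h1 v hv hC.symm)) hC))
    · have hx : u.val.1 = v.val.1 := Sum.inl.inj huv
      rcases eq_or_ne u.val.2 v.val.2 with hC | hC
      · exact Subtype.ext (Prod.ext hx hC)
      · push_neg at h2
        obtain ⟨w, hw, hwC, hwlt⟩ := h2
        refine absurd (?_ : (designGraph B).Adj u w) (hs u hu w hw)
        refine Or.inl ⟨?_, ?_, ?_⟩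
        · rw [hx]; exact hwlt
        · rw [hwC]; exact hC
        · rw [hwC, hx]; exact (mem_designVerts' v.2).2

/-- Let `m ≥ 3`, let `A` be a finite set with a strict linear order and let `B` be a
weakly `(m-1)`-wise balanced design over `A`. Then
`χ(Γ_{B,m}) ≥ (∑_{C ∈ B} |C|) / (|A| + |B|)`. -/
theorem designGraph_chromaticNumber_ge {α : Type*} [LinearOrder α] (m : ℕ) (hm : 3 ≤ m)
    (A : Finset α) (B : Finset (Finset α))
    (hB : IsWeaklyBalancedDesign (m - 1) A B) :
    ((∑ C ∈ B, C.card : ℕ) : ℝ) / ((A.card + B.card : ℕ) : ℝ) ≤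
      (((designGraph B).chromaticNumber.toNat : ℕ) : ℝ) := by
  classical
  set k := (designGraph B).chromaticNumber.toNat with hk
  obtain ⟨f⟩ := (designGraph B).colorable_chromaticNumber_of_fintype
  have hcount : (∑ C ∈ B, C.card) ≤ k * (A.card + B.card) := by
    have h1 : (Finset.univ : Finset (designVerts (α := α) B)).card
        = ∑ i : Fin k, ((Finset.univ : Finset (designVerts (α := α) B)).filter
            fun v => f v = i).card :=
      Finset.card_eq_sum_card_fiberwise (fun x _ => Finset.mem_univ _)
    have h2 : ∀ i : Fin k, ((Finset.univ : Finset (designVerts (α := α) B)).filter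
        fun v => f v = i).card ≤ A.card + B.card := by
      intro i
      apply indep_card_le A B hB.1
      intro x hx y hy hadj
      simp only [Finset.mem_filter] at hx hy
      exact f.valid hadj (hx.2.trans hy.2.symm)
    calc (∑ C ∈ B, C.card) = (designVerts B).card := (designVerts_card B).symm
      _ = (Finset.univ : Finset (designVerts (α := α) B)).card := by
          simp [Finset.card_univ]
      _ ≤ ∑ i : Fin k, (A.card + B.card) := h1 ▸ Finset.sum_le_sum fun i _ => h2 i
      _ = k * (A.card + B.card) := by simp [mul_comm]
  rcases Nat.eq_zero_or_pos (A.card + B.card) with h0 | h0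
  · have : B.card = 0 := by omega
    have hBe : B = ∅ := Finset.card_eq_zero.1 this
    simp [hBe]
  · rw [div_le_iff₀ (by positivity)]
    calc ((∑ C ∈ B, C.card : ℕ) : ℝ) ≤ ((k * (A.card + B.card) : ℕ) : ℝ) := by
          exact_mod_cast hcount
      _ = k * ((A.card + B.card : ℕ) : ℝ) := by push_cast; ring
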